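/- Let T be a positive integer, V_1,...,V_T independent, finitely supported, nonnegative real random variables, M a matroid on N = {1,...,T} with independent-set family I, and G a simple graph on N. Let x : N → [0,1] and y : N → ℝ satisfy: for every t there is a Borel set B_t ⊆ ℝ with P(V_t ∈ B_t) = x_t and E[V_t · 1(V_t ∈ B_t)] = x_t y_t. Define π_t by the backward recursion π_t = Σ_{t' > t, {t,t'} ∈ E} x_{t'} · max(y_{t'} − π_{t'}, 0). Let τ be any nonnegative-valued function of pairs (t, Y') with Y' ⊆ {1,...,t−1}. Define the random accepted sets by Y_0 = ∅ and, for t = 1,...,T: t is accepted (Y_t = Y_{t−1} ∪ {t}) if and only if Y_{t−1} ∪ {t} ∈ I, Y_{t−1} ∪ {t} is independent in G, and V_t ≥ τ(t, Y_{t−1}) + π_t; otherwise Y_t = Y_{t−1}. Let Y = Y_T. Then E[ Σ_{t ∈ Y} (V_t − τ(t, Y_{t−1})) ] ≥ E[ Σ over t with Y_{t−1} ∪ {t} ∈ I of x_t · max(y_t − τ(t, Y_{t−1}) − π_t, 0) ]. -/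

import Mathlib

open Finset

attribute [local instance] Classical.propDecidable

/-- Proposition 2 of Baek–Ma, the key surplus inequality.
The accepted-set process `Yproc ω k` (the set accepted among the first `k` agents on
sample path `ω`) is characterized by the threshold-acceptance recursion. -/
theorem stmt_5
    (T : ℕ) (hT : 0 < T)
    (Ω : Fin T → Type) [∀ t, Fintype (Ω t)]
    (w : ∀ t, Ω t → ℝ)
    (hw0 : ∀ t o, 0 ≤ w t o)
    (hw1 : ∀ t, ∑ o, w t o = 1)
    (v : ∀ t, Ω t → ℝ)
    (hv : ∀ t o, 0 ≤ v t o)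
    (Indep : Finset (Fin T) → Prop)
    (hIempty : Indep ∅)
    (hIdown : ∀ ⦃S S' : Finset (Fin T)⦄, S' ⊆ S → Indep S → Indep S')
    (hIexch : ∀ ⦃S S' : Finset (Fin T)⦄, Indep S → Indep S' → S'.card < S.card →
      ∃ t ∈ S \ S', Indep (insert t S'))
    (G : SimpleGraph (Fin T))
    (x : Fin T → ℝ) (hx0 : ∀ t, 0 ≤ x t) (hx1 : ∀ t, x t ≤ 1)
    (y : Fin T → ℝ)
    -- the quantile events B_t realizing (x_t, y_t)
    (B : Fin T → Set ℝ)
    (hB1 : ∀ t, ∑ o ∈ univ.filter (fun o => v t o ∈ B t), w t o = x t)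
    (hB2 : ∀ t, ∑ o ∈ univ.filter (fun o => v t o ∈ B t), w t o * v t o = x t * y t)
    -- backward recursion defining π
    (pi : Fin T → ℝ)
    (hpi : ∀ t, pi t = ∑ t' ∈ univ.filter (fun t' => t < t' ∧ G.Adj t t'),
      x t' * max (y t' - pi t') 0)
    -- τ: any nonnegative function of (t, Y') with Y' ⊆ {1,...,t−1}
    (τ : Fin T → Finset (Fin T) → ℝ)
    (hτ : ∀ (t : Fin T) (Y' : Finset (Fin T)), (∀ s ∈ Y', s < t) → 0 ≤ τ t Y')
    -- the accepted-set process
    (Yproc : (∀ t, Ω t) → ℕ → Finset (Fin T))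
    (hY0 : ∀ ω, Yproc ω 0 = ∅)
    (hYstep : ∀ (ω : ∀ t, Ω t) (t : Fin T),
      Yproc ω (t.val + 1) =
        if Indep (insert t (Yproc ω t.val)) ∧
            (∀ a ∈ insert t (Yproc ω t.val), ∀ b ∈ insert t (Yproc ω t.val),
              a ≠ b → ¬ G.Adj a b) ∧
            τ t (Yproc ω t.val) + pi t ≤ v t (ω t)
        then insert t (Yproc ω t.val) else Yproc ω t.val) :
    ∑ ω : (∀ t, Ω t), (∏ t, w t (ω t)) *
        ∑ t ∈ Yproc ω T, (v t (ω t) - τ t (Yproc ω t.val)) ≥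
      ∑ ω : (∀ t, Ω t), (∏ t, w t (ω t)) *
        ∑ t ∈ univ.filter (fun t : Fin T => Indep (insert t (Yproc ω t.val))),
          x t * max (y t - τ t (Yproc ω t.val) - pi t) 0 := by
  classical
  have hWnn : ∀ ω : (∀ s, Ω s), (0:ℝ) ≤ ∏ s, w s (ω s) :=
    fun ω => Finset.prod_nonneg fun s _ => hw0 s (ω s)
  -- members of `Yproc ω k` have index < k
  have hmem : ∀ (ω : ∀ s, Ω s) (k : ℕ), k ≤ T → ∀ s ∈ Yproc ω k, s.val < k := by
    intro ω k
    induction k with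
    | zero => intro _ s hs; rw [hY0] at hs; exact absurd hs (Finset.notMem_empty s)
    | succ k ih =>
      intro hk s hs
      have hkT : k < T := hk
      have hstep := hYstep ω ⟨k, hkT⟩
      simp only [Fin.val_mk] at hstep
      rw [hstep] at hs
      split_ifs at hs with h
      · rcases Finset.mem_insert.mp hs with h' | h'
        · rw [h']; exact Nat.lt_succ_self k
        · exact Nat.lt_succ_of_lt (ih hkT.le s h')
      · exact Nat.lt_succ_of_lt (ih hkT.le s hs)
  -- one-step monotonicity
  have hsub : ∀ (ω : ∀ s, Ω s) (k : ℕ), k < T → Yproc ω k ⊆ Yproc ω (k + 1) := by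
    intro ω k hk
    have hstep := hYstep ω ⟨k, hk⟩
    simp only [Fin.val_mk] at hstep
    rw [hstep]
    split_ifs
    · exact Finset.subset_insert _ _
    · exact subset_rfl
  have hmono : ∀ (ω : ∀ s, Ω s) (k k' : ℕ), k ≤ k' → k' ≤ T → Yproc ω k ⊆ Yproc ω k' := by
    intro ω k k'
    induction k' with
    | zero => intro hk _; rw [Nat.le_zero.mp hk]
    | succ n ih =>
      intro hk hk'
      rcases Nat.lt_or_ge k (n + 1) with h | h
      · exact (ih (Nat.lt_succ_iff.mp h) (Nat.le_of_succ_le hk')).trans (hsub ω n hk')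
      · rw [Nat.le_antisymm hk h]
  -- accepted sets are graph-independent
  have hGind : ∀ (ω : ∀ s, Ω s) (k : ℕ), k ≤ T →
      ∀ a ∈ Yproc ω k, ∀ b ∈ Yproc ω k, a ≠ b → ¬ G.Adj a b := by
    intro ω k
    induction k with
    | zero => intro _ a ha; rw [hY0] at ha; exact absurd ha (Finset.notMem_empty a)
    | succ k ih =>
      intro hk
      have hkT : k < T := hk
      have hstep := hYstep ω ⟨k, hkT⟩
      simp only [Fin.val_mk] at hstep
      rw [hstep]
      split_ifs with h
      · exact fun a ha b hb => h.2.1 a ha b hb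
      · exact ih hkT.le
  -- membership stabilizes after time t
  have hstable : ∀ (ω : ∀ s, Ω s) (t : Fin T) (k : ℕ), t.val + 1 ≤ k → k ≤ T →
      (t ∈ Yproc ω k ↔ t ∈ Yproc ω (t.val + 1)) := by
    intro ω t k
    induction k with
    | zero => intro h; exact absurd h (Nat.not_succ_le_zero _)
    | succ n ih =>
      intro hn hnT
      rcases Nat.lt_or_ge (t.val + 1) (n + 1) with h | h
      · have hnT' : n < T := hnT
        have htval : t.val < n := Nat.succ_lt_succ_iff.mp h
        have hstep := hYstep ω ⟨n, hnT'⟩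
        simp only [Fin.val_mk] at hstep
        rw [hstep]
        have htn : t ≠ (⟨n, hnT'⟩ : Fin T) := by
          intro he
          rw [Fin.ext_iff] at he
          simp only [Fin.val_mk] at he
          omega
        split_ifs with hc
        · rw [Finset.mem_insert]
          constructor
          · rintro (he | hm)
            · exact absurd he htn
            · exact (ih (Nat.lt_succ_iff.mp h) hnT'.le).mp hm
          · intro hm; exact Or.inr ((ih (Nat.lt_succ_iff.mp h) hnT'.le).mpr hm)
        · exact ih (Nat.lt_succ_iff.mp h) hnT'.le
      · have heq : t.val + 1 = n + 1 := Nat.le_antisymm hn h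
        rw [heq]
  -- characterization of acceptance
  have hmemT : ∀ (ω : ∀ s, Ω s) (t : Fin T), t ∈ Yproc ω T ↔
      (Indep (insert t (Yproc ω t.val)) ∧
        (∀ a ∈ insert t (Yproc ω t.val), ∀ b ∈ insert t (Yproc ω t.val),
          a ≠ b → ¬ G.Adj a b) ∧
        τ t (Yproc ω t.val) + pi t ≤ v t (ω t)) := by
    intro ω t
    rw [hstable ω t T t.isLt le_rfl, hYstep ω t]
    split_ifs with hc
    · exact ⟨fun _ => hc, fun _ => Finset.mem_insert_self t _⟩
    · constructor
      · intro hm; exact absurd (hmem ω t.val t.isLt.le t hm) (Nat.lt_irrefl _)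
      · intro hc'; exact absurd hc' hc
  -- prefix determinism
  have hprefix : ∀ (k : ℕ), k ≤ T → ∀ (ω ω' : ∀ s, Ω s),
      (∀ s : Fin T, s.val < k → ω s = ω' s) → Yproc ω k = Yproc ω' k := by
    intro k
    induction k with
    | zero => intro _ ω ω' _; rw [hY0, hY0]
    | succ k ih =>
      intro hk ω ω' hs
      have hkT : k < T := hk
      have hYe : Yproc ω k = Yproc ω' k :=
        ih hkT.le ω ω' fun s h => hs s (Nat.lt_succ_of_lt h)
      have h1 := hYstep ω ⟨k, hkT⟩
      have h2 := hYstep ω' ⟨k, hkT⟩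
      simp only [Fin.val_mk] at h1 h2
      rw [h1, h2, hYe, hs ⟨k, hkT⟩ (Nat.lt_succ_self k)]
  -- key per-agent inequality (conditioning on the prefix)
  have keyA : ∀ t : Fin T,
      (∑ ω : ∀ s, Ω s, (∏ s, w s (ω s)) *
        (if Indep (insert t (Yproc ω t.val)) ∧
            (∀ a ∈ insert t (Yproc ω t.val), ∀ b ∈ insert t (Yproc ω t.val),
              a ≠ b → ¬ G.Adj a b)
          then x t * max (y t - τ t (Yproc ω t.val) - pi t) 0 else 0)) ≤
      ∑ ω : ∀ s, Ω s, (∏ s, w s (ω s)) *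
        (if t ∈ Yproc ω T then v t (ω t) - (τ t (Yproc ω t.val) + pi t) else 0) := by
    intro t
    have hne : Nonempty (Ω t) := by
      by_contra h
      rw [not_nonempty_iff] at h
      have h1 := hw1 t
      rw [Finset.univ_eq_empty, Finset.sum_empty] at h1
      exact zero_ne_one h1
    obtain ⟨a₀⟩ := hne
    set e := Equiv.piSplitAt t Ω with he
    have hsum : ∀ F : (∀ s, Ω s) → ℝ,
        ∑ ω : ∀ s, Ω s, F ω =
          ∑ ρ : ∀ j : {j // j ≠ t}, Ω j, ∑ a : Ω t, F (e.symm (a, ρ)) := by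
      intro F
      rw [← Equiv.sum_comp e.symm F, Fintype.sum_prod_type, Finset.sum_comm]
    rw [hsum, hsum]
    apply Finset.sum_le_sum
    intro ρ _
    have hat : ∀ a : Ω t, (e.symm (a, ρ)) t = a := fun a =>
      congrArg Prod.fst (e.apply_symm_apply (a, ρ))
    have hoff : ∀ (a : Ω t) (j : Fin T) (hj : j ≠ t), (e.symm (a, ρ)) j = ρ ⟨j, hj⟩ :=
      fun a j hj => congrArg (fun p => p.2 ⟨j, hj⟩) (e.apply_symm_apply (a, ρ))
    have hYc : ∀ a : Ω t, Yproc (e.symm (a, ρ)) t.val = Yproc (e.symm (a₀, ρ)) t.val := by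
      intro a
      refine hprefix t.val t.isLt.le _ _ fun s hs => ?_
      have hst : s ≠ t := by
        intro hst; rw [hst] at hs; exact Nat.lt_irrefl _ hs
      rw [hoff a s hst, hoff a₀ s hst]
    set Y' := Yproc (e.symm (a₀, ρ)) t.val with hY'
    set P : ℝ := ∏ j : {j // j ≠ t}, w j.1 (ρ j) with hP
    have hPnn : 0 ≤ P := Finset.prod_nonneg fun j _ => hw0 j.1 (ρ j)
    have hF : ∀ a : Ω t, (∏ s, w s ((e.symm (a, ρ)) s)) = w t a * P := by
      intro a
      rw [← Finset.mul_prod_erase Finset.univ _ (Finset.mem_univ t), hat a]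
      congr 1
      rw [Finset.prod_subtype (Finset.univ.erase t) (p := fun j => j ≠ t)
        (fun j => by simp [Finset.mem_erase]) (fun j => w j ((e.symm (a, ρ)) j))]
      exact Finset.prod_congr rfl fun j _ => by rw [hoff a j.1 j.2]
    have hcond : ∀ a : Ω t, (t ∈ Yproc (e.symm (a, ρ)) T) ↔
        (Indep (insert t Y') ∧
          (∀ a' ∈ insert t Y', ∀ b ∈ insert t Y', a' ≠ b → ¬ G.Adj a' b) ∧
          τ t Y' + pi t ≤ v t a) := by
      intro a
      rw [hmemT, hYc a, hat a]
    have hLrw : (∑ a : Ω t, (∏ s, w s ((e.symm (a, ρ)) s)) *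
        (if Indep (insert t (Yproc (e.symm (a, ρ)) t.val)) ∧
            (∀ a' ∈ insert t (Yproc (e.symm (a, ρ)) t.val),
              ∀ b ∈ insert t (Yproc (e.symm (a, ρ)) t.val), a' ≠ b → ¬ G.Adj a' b)
          then x t * max (y t - τ t (Yproc (e.symm (a, ρ)) t.val) - pi t) 0 else 0)) =
        ∑ a : Ω t, (w t a * P) *
          (if Indep (insert t Y') ∧
              (∀ a' ∈ insert t Y', ∀ b ∈ insert t Y', a' ≠ b → ¬ G.Adj a' b)
            then x t * max (y t - τ t Y' - pi t) 0 else 0) :=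
      Finset.sum_congr rfl fun a _ => by rw [hF a, hYc a]
    have hRrw : (∑ a : Ω t, (∏ s, w s ((e.symm (a, ρ)) s)) *
        (if t ∈ Yproc (e.symm (a, ρ)) T
          then v t ((e.symm (a, ρ)) t) - (τ t (Yproc (e.symm (a, ρ)) t.val) + pi t) else 0)) =
        ∑ a : Ω t, (w t a * P) *
          (if Indep (insert t Y') ∧
              (∀ a' ∈ insert t Y', ∀ b ∈ insert t Y', a' ≠ b → ¬ G.Adj a' b) ∧
              τ t Y' + pi t ≤ v t a
            then v t a - (τ t Y' + pi t) else 0) := by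
      refine Finset.sum_congr rfl fun a _ => ?_
      rw [hF a, hYc a, hat a]
      exact congrArg (fun z => (w t a * P) * z) (if_congr (hcond a) rfl rfl)
    rw [hLrw, hRrw]
    by_cases hc0 : Indep (insert t Y') ∧
        ∀ a' ∈ insert t Y', ∀ b ∈ insert t Y', a' ≠ b → ¬ G.Adj a' b
    · -- feasible case
      have hY'lt : ∀ s ∈ Y', s < t := by
        intro s hs
        rw [hY'] at hs
        exact hmem _ t.val t.isLt.le s hs
      have hτnn : 0 ≤ τ t Y' := hτ t Y' hY'lt
      have hiff : ∀ a : Ω t, (Indep (insert t Y') ∧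
          (∀ a' ∈ insert t Y', ∀ b ∈ insert t Y', a' ≠ b → ¬ G.Adj a' b) ∧
          τ t Y' + pi t ≤ v t a) ↔ (τ t Y' + pi t ≤ v t a) :=
        fun a => ⟨fun h => h.2.2, fun h => ⟨hc0.1, hc0.2, h⟩⟩
      have hS0 : (0:ℝ) ≤ ∑ a : Ω t, w t a *
          (if τ t Y' + pi t ≤ v t a then v t a - (τ t Y' + pi t) else 0) :=
        Finset.sum_nonneg fun a _ => mul_nonneg (hw0 t a)
          (by split_ifs with h; exacts [sub_nonneg.mpr h, le_rfl])
      have hS1 : x t * (y t - (τ t Y' + pi t)) ≤ ∑ a : Ω t, w t a *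
          (if τ t Y' + pi t ≤ v t a then v t a - (τ t Y' + pi t) else 0) := by
        have e2 : x t * (y t - (τ t Y' + pi t)) =
            ∑ a ∈ univ.filter (fun a => v t a ∈ B t), w t a * (v t a - (τ t Y' + pi t)) := by
          calc x t * (y t - (τ t Y' + pi t))
              = x t * y t - x t * (τ t Y' + pi t) := by ring
            _ = (∑ a ∈ univ.filter (fun a => v t a ∈ B t), w t a * v t a)
                  - (∑ a ∈ univ.filter (fun a => v t a ∈ B t), w t a) * (τ t Y' + pi t) := by
                rw [hB2 t, hB1 t]
            _ = ∑ a ∈ univ.filter (fun a => v t a ∈ B t),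
                  (w t a * v t a - w t a * (τ t Y' + pi t)) := by
                rw [Finset.sum_sub_distrib, Finset.sum_mul]
            _ = ∑ a ∈ univ.filter (fun a => v t a ∈ B t),
                  w t a * (v t a - (τ t Y' + pi t)) :=
                Finset.sum_congr rfl fun a _ => by ring
        rw [e2, Finset.sum_filter]
        apply Finset.sum_le_sum
        intro a _
        split_ifs with hBa hva hva
        · exact le_rfl
        · have : v t a - (τ t Y' + pi t) ≤ 0 := by linarith [lt_of_not_ge hva]
          calc w t a * (v t a - (τ t Y' + pi t)) ≤ 0 :=
              mul_nonpos_of_nonneg_of_nonpos (hw0 t a) this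
            _ = w t a * 0 := by ring
        · exact mul_nonneg (hw0 t a) (sub_nonneg.mpr hva)
        · exact le_of_eq (by ring)
      calc (∑ a : Ω t, (w t a * P) *
            (if Indep (insert t Y') ∧
                (∀ a' ∈ insert t Y', ∀ b ∈ insert t Y', a' ≠ b → ¬ G.Adj a' b)
              then x t * max (y t - τ t Y' - pi t) 0 else 0))
          = ∑ a : Ω t, w t a * (P * (x t * max (y t - (τ t Y' + pi t)) 0)) := by
            refine Finset.sum_congr rfl fun a _ => ?_
            rw [if_pos hc0, sub_sub]; ring
        _ = (∑ a : Ω t, w t a) * (P * (x t * max (y t - (τ t Y' + pi t)) 0)) := by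
            rw [← Finset.sum_mul]
        _ = P * (x t * max (y t - (τ t Y' + pi t)) 0) := by rw [hw1 t, one_mul]
        _ ≤ P * (∑ a : Ω t, w t a *
              (if τ t Y' + pi t ≤ v t a then v t a - (τ t Y' + pi t) else 0)) := by
            apply mul_le_mul_of_nonneg_left _ hPnn
            rw [mul_max_of_nonneg _ _ (hx0 t), mul_zero]
            exact max_le hS1 hS0
        _ = ∑ a : Ω t, (w t a * P) *
              (if Indep (insert t Y') ∧
                  (∀ a' ∈ insert t Y', ∀ b ∈ insert t Y', a' ≠ b → ¬ G.Adj a' b) ∧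
                  τ t Y' + pi t ≤ v t a
                then v t a - (τ t Y' + pi t) else 0) := by
            rw [Finset.mul_sum]
            refine Finset.sum_congr rfl fun a _ => ?_
            rw [if_congr (hiff a) rfl rfl]; ring
    · -- infeasible case: both sides vanish
      refine le_of_eq (Finset.sum_congr rfl fun a _ => ?_)
      rw [if_neg hc0, if_neg (fun h => hc0 ⟨h.1, h.2.1⟩)]
  -- pointwise bound: collected graph prices cover surplus of graph-blocked feasible agents
  have partBpt : ∀ ω : ∀ s, Ω s,
      (∑ t' ∈ univ.filter (fun t' : Fin T => Indep (insert t' (Yproc ω t'.val)) ∧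
          ¬ (∀ a ∈ insert t' (Yproc ω t'.val), ∀ b ∈ insert t' (Yproc ω t'.val),
            a ≠ b → ¬ G.Adj a b)),
        x t' * max (y t' - τ t' (Yproc ω t'.val) - pi t') 0) ≤
      ∑ t'' ∈ Yproc ω T, pi t'' := by
    intro ω
    have hcalc : ∑ t'' ∈ Yproc ω T, pi t'' =
        ∑ t' ∈ univ, ∑ t'' ∈ Yproc ω T,
          (if t'' < t' ∧ G.Adj t'' t' then x t' * max (y t' - pi t') 0 else 0) := by
      rw [Finset.sum_comm]
      refine Finset.sum_congr rfl fun t'' _ => ?_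
      rw [hpi t'', Finset.sum_filter]
    rw [hcalc]
    have hnn : ∀ t' : Fin T, ∀ t'' ∈ Yproc ω T,
        (0:ℝ) ≤ (if t'' < t' ∧ G.Adj t'' t' then x t' * max (y t' - pi t') 0 else 0) := by
      intro t' t'' _
      split_ifs
      · exact mul_nonneg (hx0 t') (le_max_right _ _)
      · exact le_rfl
    refine le_trans ?_ (Finset.sum_le_sum_of_subset_of_nonneg
      (Finset.filter_subset (fun t' : Fin T => Indep (insert t' (Yproc ω t'.val)) ∧
        ¬ (∀ a ∈ insert t' (Yproc ω t'.val), ∀ b ∈ insert t' (Yproc ω t'.val),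
          a ≠ b → ¬ G.Adj a b)) univ)
      (fun t' _ _ => Finset.sum_nonneg (hnn t')))
    apply Finset.sum_le_sum
    intro u hu
    rw [Finset.mem_filter] at hu
    obtain ⟨-, hIM, hnG⟩ := hu
    push_neg at hnG
    obtain ⟨aa, haa, bb, hbb, hab, hAdj⟩ := hnG
    have hblock : ∃ z ∈ Yproc ω T, z < u ∧ G.Adj z u := by
      rcases Finset.mem_insert.mp haa with h1 | h1 <;> rcases Finset.mem_insert.mp hbb with h2 | h2
      · exact absurd (h1.trans h2.symm) hab
      · refine ⟨bb, hmono ω u.val T u.isLt.le le_rfl h2,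
          hmem ω u.val u.isLt.le bb h2, ?_⟩
        rw [← h1]; exact G.adj_symm hAdj
      · refine ⟨aa, hmono ω u.val T u.isLt.le le_rfl h1,
          hmem ω u.val u.isLt.le aa h1, ?_⟩
        rw [← h2]; exact hAdj
      · exact absurd hAdj (hGind ω u.val u.isLt.le aa h1 bb h2 hab)
    obtain ⟨z, hzY, hzlt, hzadj⟩ := hblock
    have hτnn : 0 ≤ τ u (Yproc ω u.val) :=
      hτ u _ (fun s hs => hmem ω u.val u.isLt.le s hs)
    calc x u * max (y u - τ u (Yproc ω u.val) - pi u) 0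
        ≤ x u * max (y u - pi u) 0 := by
          apply mul_le_mul_of_nonneg_left _ (hx0 u)
          exact max_le_max (by linarith) le_rfl
      _ = (if z < u ∧ G.Adj z u then x u * max (y u - pi u) 0 else 0) := by
          rw [if_pos ⟨hzlt, hzadj⟩]
      _ ≤ ∑ s ∈ Yproc ω T,
            (if s < u ∧ G.Adj s u then x u * max (y u - pi u) 0 else 0) :=
          Finset.single_le_sum (hnn u) hzY
  -- splitting identities
  have hsplitRHS : ∀ ω : ∀ s, Ω s,
      (∑ t ∈ univ.filter (fun t : Fin T => Indep (insert t (Yproc ω t.val))),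
        x t * max (y t - τ t (Yproc ω t.val) - pi t) 0)
      = (∑ t ∈ univ.filter (fun t : Fin T => Indep (insert t (Yproc ω t.val)) ∧
            (∀ a ∈ insert t (Yproc ω t.val), ∀ b ∈ insert t (Yproc ω t.val),
              a ≠ b → ¬ G.Adj a b)),
          x t * max (y t - τ t (Yproc ω t.val) - pi t) 0)
        + ∑ t ∈ univ.filter (fun t : Fin T => Indep (insert t (Yproc ω t.val)) ∧
            ¬ (∀ a ∈ insert t (Yproc ω t.val), ∀ b ∈ insert t (Yproc ω t.val),
              a ≠ b → ¬ G.Adj a b)),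
          x t * max (y t - τ t (Yproc ω t.val) - pi t) 0 := by
    intro ω
    rw [← Finset.sum_filter_add_sum_filter_not
      (univ.filter (fun t : Fin T => Indep (insert t (Yproc ω t.val))))
      (fun t : Fin T => ∀ a ∈ insert t (Yproc ω t.val), ∀ b ∈ insert t (Yproc ω t.val),
        a ≠ b → ¬ G.Adj a b),
      Finset.filter_filter, Finset.filter_filter]
  have hsplitLHS : ∀ ω : ∀ s, Ω s,
      (∑ t ∈ Yproc ω T, (v t (ω t) - τ t (Yproc ω t.val)))
      = (∑ t ∈ univ, if t ∈ Yproc ω T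
            then v t (ω t) - (τ t (Yproc ω t.val) + pi t) else 0)
        + ∑ t ∈ Yproc ω T, pi t := by
    intro ω
    rw [Finset.sum_ite_mem, Finset.univ_inter, ← Finset.sum_add_distrib]
    exact Finset.sum_congr rfl fun t _ => by ring
  have partB : (∑ ω : ∀ s, Ω s, (∏ s, w s (ω s)) *
        ∑ t ∈ univ.filter (fun t : Fin T => Indep (insert t (Yproc ω t.val)) ∧
            ¬ (∀ a ∈ insert t (Yproc ω t.val), ∀ b ∈ insert t (Yproc ω t.val),
              a ≠ b → ¬ G.Adj a b)),
          x t * max (y t - τ t (Yproc ω t.val) - pi t) 0)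
      ≤ ∑ ω : ∀ s, Ω s, (∏ s, w s (ω s)) * ∑ t ∈ Yproc ω T, pi t :=
    Finset.sum_le_sum fun ω _ => mul_le_mul_of_nonneg_left (partBpt ω) (hWnn ω)
  have partA : (∑ ω : ∀ s, Ω s, (∏ s, w s (ω s)) *
        ∑ t ∈ univ.filter (fun t : Fin T => Indep (insert t (Yproc ω t.val)) ∧
            (∀ a ∈ insert t (Yproc ω t.val), ∀ b ∈ insert t (Yproc ω t.val),
              a ≠ b → ¬ G.Adj a b)),
          x t * max (y t - τ t (Yproc ω t.val) - pi t) 0)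
      ≤ ∑ ω : ∀ s, Ω s, (∏ s, w s (ω s)) *
          ∑ t ∈ univ, (if t ∈ Yproc ω T
            then v t (ω t) - (τ t (Yproc ω t.val) + pi t) else 0) := by
    calc (∑ ω : ∀ s, Ω s, (∏ s, w s (ω s)) *
          ∑ t ∈ univ.filter (fun t : Fin T => Indep (insert t (Yproc ω t.val)) ∧
              (∀ a ∈ insert t (Yproc ω t.val), ∀ b ∈ insert t (Yproc ω t.val),
                a ≠ b → ¬ G.Adj a b)),
            x t * max (y t - τ t (Yproc ω t.val) - pi t) 0)
        = ∑ ω : ∀ s, Ω s, ∑ t ∈ univ, (∏ s, w s (ω s)) *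
            (if Indep (insert t (Yproc ω t.val)) ∧
                (∀ a ∈ insert t (Yproc ω t.val), ∀ b ∈ insert t (Yproc ω t.val),
                  a ≠ b → ¬ G.Adj a b)
              then x t * max (y t - τ t (Yproc ω t.val) - pi t) 0 else 0) := by
          refine Finset.sum_congr rfl fun ω _ => ?_
          rw [Finset.sum_filter, Finset.mul_sum]
      _ = ∑ t ∈ univ, ∑ ω : ∀ s, Ω s, (∏ s, w s (ω s)) *
            (if Indep (insert t (Yproc ω t.val)) ∧
                (∀ a ∈ insert t (Yproc ω t.val), ∀ b ∈ insert t (Yproc ω t.val),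
                  a ≠ b → ¬ G.Adj a b)
              then x t * max (y t - τ t (Yproc ω t.val) - pi t) 0 else 0) :=
          Finset.sum_comm
      _ ≤ ∑ t ∈ univ, ∑ ω : ∀ s, Ω s, (∏ s, w s (ω s)) *
            (if t ∈ Yproc ω T then v t (ω t) - (τ t (Yproc ω t.val) + pi t) else 0) :=
          Finset.sum_le_sum fun t _ => keyA t
      _ = ∑ ω : ∀ s, Ω s, ∑ t ∈ univ, (∏ s, w s (ω s)) *
            (if t ∈ Yproc ω T then v t (ω t) - (τ t (Yproc ω t.val) + pi t) else 0) :=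
          Finset.sum_comm
      _ = ∑ ω : ∀ s, Ω s, (∏ s, w s (ω s)) *
            ∑ t ∈ univ, (if t ∈ Yproc ω T
              then v t (ω t) - (τ t (Yproc ω t.val) + pi t) else 0) :=
          Finset.sum_congr rfl fun ω _ => (Finset.mul_sum _ _ _).symm
  rw [ge_iff_le]
  calc (∑ ω : ∀ s, Ω s, (∏ s, w s (ω s)) *
        ∑ t ∈ univ.filter (fun t : Fin T => Indep (insert t (Yproc ω t.val))),
          x t * max (y t - τ t (Yproc ω t.val) - pi t) 0)
      = (∑ ω : ∀ s, Ω s, (∏ s, w s (ω s)) *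
          ∑ t ∈ univ.filter (fun t : Fin T => Indep (insert t (Yproc ω t.val)) ∧
              (∀ a ∈ insert t (Yproc ω t.val), ∀ b ∈ insert t (Yproc ω t.val),
                a ≠ b → ¬ G.Adj a b)),
            x t * max (y t - τ t (Yproc ω t.val) - pi t) 0)
        + ∑ ω : ∀ s, Ω s, (∏ s, w s (ω s)) *
          ∑ t ∈ univ.filter (fun t : Fin T => Indep (insert t (Yproc ω t.val)) ∧
              ¬ (∀ a ∈ insert t (Yproc ω t.val), ∀ b ∈ insert t (Yproc ω t.val),
                a ≠ b → ¬ G.Adj a b)),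
            x t * max (y t - τ t (Yproc ω t.val) - pi t) 0 := by
        rw [← Finset.sum_add_distrib]
        refine Finset.sum_congr rfl fun ω _ => ?_
        rw [hsplitRHS ω, mul_add]
    _ ≤ (∑ ω : ∀ s, Ω s, (∏ s, w s (ω s)) *
          ∑ t ∈ univ, (if t ∈ Yproc ω T
            then v t (ω t) - (τ t (Yproc ω t.val) + pi t) else 0))
        + ∑ ω : ∀ s, Ω s, (∏ s, w s (ω s)) * ∑ t ∈ Yproc ω T, pi t :=
        add_le_add partA partB
    _ = ∑ ω : ∀ s, Ω s, (∏ s, w s (ω s)) *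
          ∑ t ∈ Yproc ω T, (v t (ω t) - τ t (Yproc ω t.val)) := by
        rw [← Finset.sum_add_distrib]
        refine Finset.sum_congr rfl fun ω _ => ?_
        rw [← mul_add, ← hsplitLHS ω]
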